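/- Let P(z, z̄) = ∑_{k=-m}^{m} C_k z^{m+k} z̄^{m-k} be a real-valued homogeneous polynomial of degree 2m on ℂ with P ≥ 0 everywhere. Then for every k, |Re C_k| ≤ C_0. Moreover, after replacing z by λz for a suitable unimodular λ (a rotation), for each fixed k one obtains |C_k| ≤ C_0. -/

import Mathlib

open Complex Finset Real

private lemma re_bound (m : ℕ) (C : ℤ → ℂ)
    (hreal : ∀ k : ℤ, C (-k) = starRingEnd ℂ (C k))
    (hnonneg : ∀ z : ℂ, 0 ≤ (∑ k ∈ Finset.Icc (-(m : ℤ)) (m : ℤ),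
      C k * z ^ ((m : ℤ) + k).toNat * (starRingEnd ℂ z) ^ ((m : ℤ) - k).toNat).re) :
    ∀ k ∈ Finset.Icc (-(m : ℤ)) (m : ℤ), |(C k).re| ≤ (C 0).re := by
  intro k hk
  obtain ⟨hk1, hk2⟩ := Finset.mem_Icc.mp hk
  set N : ℕ := 4 * m + 1 with hNdef
  have hN0 : N ≠ 0 := by omega
  set ω : ℂ := Complex.exp (2 * π * I / N) with hωdef
  have hprim : IsPrimitiveRoot ω N := Complex.isPrimitiveRoot_exp N hN0
  have habs : ‖ω‖ = 1 := by
    have h : (2 * (π:ℂ) * I / (N:ℂ)) = ((2 * π / N : ℝ) : ℂ) * I := by push_cast; ring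
    rw [hωdef, h]
    exact Complex.norm_exp_ofReal_mul_I _
  have hne : ω ≠ 0 := by
    intro h; rw [h] at habs; simp at habs
  have hconj : starRingEnd ℂ ω = ω⁻¹ := (Complex.inv_eq_conj habs).symm
  -- geometric sums of roots of unity
  have hgeom : ∀ a : ℤ, ∑ t ∈ Finset.range N, (ω ^ a) ^ t
      = if (N:ℤ) ∣ a then (N:ℂ) else 0 := by
    intro a
    by_cases h : (N:ℤ) ∣ a
    · have h1 : ω ^ a = 1 := (hprim.zpow_eq_one_iff_dvd a).mpr h
      simp [h1, h]
    · have hx1 : ω ^ a ≠ 1 := fun hh => h ((hprim.zpow_eq_one_iff_dvd a).mp hh)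
      have hxN : (ω ^ a) ^ N = 1 := by
        rw [← zpow_natCast (ω ^ a) N, ← zpow_mul, mul_comm, zpow_mul, zpow_natCast,
          hprim.pow_eq_one, one_zpow]
      rw [geom_sum_eq hx1, hxN]
      simp [h]
  -- evaluation of P at ω^t
  have heval : ∀ t : ℕ, (∑ j ∈ Finset.Icc (-(m : ℤ)) (m : ℤ),
      C j * (ω ^ t) ^ ((m : ℤ) + j).toNat * (starRingEnd ℂ (ω ^ t)) ^ ((m : ℤ) - j).toNat)
      = ∑ j ∈ Finset.Icc (-(m : ℤ)) (m : ℤ), C j * (ω ^ (2 * j)) ^ t := by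
    intro t
    refine Finset.sum_congr rfl fun j hj => ?_
    obtain ⟨hj1, hj2⟩ := Finset.mem_Icc.mp hj
    have ha : ((((m : ℤ) + j).toNat : ℤ)) = (m : ℤ) + j := Int.toNat_of_nonneg (by linarith)
    have hb : ((((m : ℤ) - j).toNat : ℤ)) = (m : ℤ) - j := Int.toNat_of_nonneg (by linarith)
    have h1 : (ω ^ t) ^ ((m : ℤ) + j).toNat = ω ^ ((t : ℤ) * ((m : ℤ) + j)) := by
      rw [← zpow_natCast ω t, ← zpow_natCast (ω ^ (t:ℤ)) (((m : ℤ) + j).toNat), ← zpow_mul, ha]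
    have h2 : (starRingEnd ℂ (ω ^ t)) ^ ((m : ℤ) - j).toNat
        = ω ^ (-(t : ℤ) * ((m : ℤ) - j)) := by
      rw [map_pow, hconj, inv_pow, ← zpow_natCast ω t, ← zpow_neg,
        ← zpow_natCast (ω ^ (-(t:ℤ))) (((m : ℤ) - j).toNat), ← zpow_mul, hb]
    rw [h1, h2, mul_assoc, ← zpow_add₀ hne,
      show (t : ℤ) * ((m : ℤ) + j) + -(t : ℤ) * ((m : ℤ) - j) = (2 * j) * (t : ℤ) by ring,
      zpow_mul, zpow_natCast]
  -- weighted sums pick out coefficients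
  have hT : ∀ l : ℤ, l ∈ Finset.Icc (-(m : ℤ)) (m : ℤ) →
      (∑ t ∈ Finset.range N, (ω ^ (2 * l)) ^ t *
        ∑ j ∈ Finset.Icc (-(m : ℤ)) (m : ℤ), C j * (ω ^ (2 * j)) ^ t)
      = (N : ℂ) * C (-l) := by
    intro l hl
    obtain ⟨hl1, hl2⟩ := Finset.mem_Icc.mp hl
    have step : ∀ t ∈ Finset.range N, (ω ^ (2 * l)) ^ t *
        ∑ j ∈ Finset.Icc (-(m : ℤ)) (m : ℤ), C j * (ω ^ (2 * j)) ^ t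
        = ∑ j ∈ Finset.Icc (-(m : ℤ)) (m : ℤ), C j * (ω ^ (2 * l + 2 * j)) ^ t := by
      intro t _
      rw [Finset.mul_sum]
      refine Finset.sum_congr rfl fun j _ => ?_
      rw [zpow_add₀ hne, mul_pow]; ring
    rw [Finset.sum_congr rfl step, Finset.sum_comm]
    have step2 : ∀ j ∈ Finset.Icc (-(m : ℤ)) (m : ℤ),
        (∑ t ∈ Finset.range N, C j * (ω ^ (2 * l + 2 * j)) ^ t)
        = C j * (if (N:ℤ) ∣ (2 * l + 2 * j) then (N:ℂ) else 0) := by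
      intro j _
      rw [← Finset.mul_sum, hgeom]
    rw [Finset.sum_congr rfl step2]
    rw [Finset.sum_eq_single_of_mem (-l) (by rw [Finset.mem_Icc]; omega)]
    · simp [mul_comm]
    · intro j hj hjne
      obtain ⟨hj1, hj2⟩ := Finset.mem_Icc.mp hj
      have hnd : ¬ ((N:ℤ) ∣ (2 * l + 2 * j)) := by
        intro hd
        have h0 : 2 * l + 2 * j = 0 := by
          refine Int.eq_zero_of_abs_lt_dvd hd ?_
          rw [abs_lt]; omega
        omega
      simp [hnd]
  -- nonnegativity of P at roots of unity
  have hP : ∀ t : ℕ, 0 ≤ (∑ j ∈ Finset.Icc (-(m : ℤ)) (m : ℤ),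
      C j * (ω ^ (2 * j)) ^ t).re := by
    intro t
    have := hnonneg (ω ^ t)
    rwa [heval t] at this
  -- structure of the weights
  have hw : ∀ t : ℕ, ∃ r : ℝ, -1 ≤ r ∧ r ≤ 1 ∧
      (ω ^ (2 * k)) ^ t + (ω ^ (2 * -k)) ^ t = ((2 * r : ℝ) : ℂ) := by
    intro t
    set ζ : ℂ := ω ^ (2 * k * (t : ℤ)) with hζ
    have habsζ : ‖ζ‖ = 1 := by
      rw [hζ, norm_zpow, habs, one_zpow]
    have hz1 : (ω ^ (2 * k)) ^ t = ζ := by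
      rw [hζ, ← zpow_natCast (ω ^ (2 * k)) t, ← zpow_mul]
    have hz2 : (ω ^ (2 * -k)) ^ t = starRingEnd ℂ ζ := by
      rw [← Complex.inv_eq_conj habsζ, hζ, ← zpow_natCast (ω ^ (2 * -k)) t, ← zpow_mul,
        ← zpow_neg]
      congr 1
      ring
    refine ⟨ζ.re, ?_, ?_, ?_⟩
    · have := Complex.abs_re_le_norm ζ; rw [habsζ] at this
      exact (abs_le.mp this).1
    · have := Complex.abs_re_le_norm ζ; rw [habsζ] at this
      exact (abs_le.mp this).2
    · rw [hz1, hz2, Complex.add_conj]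
  have hNpos : (0:ℝ) < N := by positivity
  have hrek : (C (-k)).re = (C k).re := by
    rw [hreal k, Complex.conj_re]
  -- sum with weight (ζ + conj ζ + 2) ≥ 0
  have key1 : 0 ≤ (C k).re + (C 0).re := by
    have hsum : (∑ t ∈ Finset.range N,
        ((ω ^ (2 * k)) ^ t + (ω ^ (2 * -k)) ^ t + 2) *
          ∑ j ∈ Finset.Icc (-(m : ℤ)) (m : ℤ), C j * (ω ^ (2 * j)) ^ t)
        = (N:ℂ) * C (-k) + (N:ℂ) * C k + 2 * ((N:ℂ) * C 0) := by
      have expand : ∀ t ∈ Finset.range N,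
          ((ω ^ (2 * k)) ^ t + (ω ^ (2 * -k)) ^ t + 2) *
            (∑ j ∈ Finset.Icc (-(m : ℤ)) (m : ℤ), C j * (ω ^ (2 * j)) ^ t)
          = (ω ^ (2 * k)) ^ t * (∑ j ∈ Finset.Icc (-(m : ℤ)) (m : ℤ), C j * (ω ^ (2 * j)) ^ t)
          + (ω ^ (2 * -k)) ^ t * (∑ j ∈ Finset.Icc (-(m : ℤ)) (m : ℤ), C j * (ω ^ (2 * j)) ^ t)
          + 2 * ((ω ^ ((2:ℤ) * 0)) ^ t * (∑ j ∈ Finset.Icc (-(m : ℤ)) (m : ℤ), C j * (ω ^ (2 * j)) ^ t)) := by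
        intro t _; simp; ring
      have h3 : ∑ t ∈ Finset.range N, (2:ℂ) * ((ω ^ ((2:ℤ) * 0)) ^ t *
          ∑ j ∈ Finset.Icc (-(m : ℤ)) (m : ℤ), C j * (ω ^ (2 * j)) ^ t)
          = 2 * ((N:ℂ) * C 0) := by
        rw [← Finset.mul_sum, hT 0 (by rw [Finset.mem_Icc]; omega)]
        norm_num
      rw [Finset.sum_congr rfl expand, Finset.sum_add_distrib, Finset.sum_add_distrib, h3,
        hT k hk, hT (-k) (by rw [Finset.mem_Icc]; omega), neg_neg]
    have hre : 0 ≤ ((N:ℂ) * C (-k) + (N:ℂ) * C k + 2 * ((N:ℂ) * C 0)).re := by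
      rw [← hsum, Complex.re_sum]
      refine Finset.sum_nonneg fun t _ => ?_
      obtain ⟨r, hr1, hr2, hr3⟩ := hw t
      rw [hr3, show ((2 * r : ℝ) : ℂ) + 2 = ((2 * r + 2 : ℝ) : ℂ) by push_cast; ring,
        Complex.re_ofReal_mul]
      exact mul_nonneg (by linarith) (hP t)
    simp only [Complex.add_re, Complex.mul_re, Complex.natCast_re, Complex.natCast_im,
      Complex.re_ofNat, Complex.im_ofNat, hrek] at hre
    nlinarith [hre]
  -- sum with weight (ζ + conj ζ - 2) ≤ 0
  have key2 : (C k).re ≤ (C 0).re := by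
    have hsum : (∑ t ∈ Finset.range N,
        ((ω ^ (2 * k)) ^ t + (ω ^ (2 * -k)) ^ t - 2) *
          ∑ j ∈ Finset.Icc (-(m : ℤ)) (m : ℤ), C j * (ω ^ (2 * j)) ^ t)
        = (N:ℂ) * C (-k) + (N:ℂ) * C k - 2 * ((N:ℂ) * C 0) := by
      have expand : ∀ t ∈ Finset.range N,
          ((ω ^ (2 * k)) ^ t + (ω ^ (2 * -k)) ^ t - 2) *
            (∑ j ∈ Finset.Icc (-(m : ℤ)) (m : ℤ), C j * (ω ^ (2 * j)) ^ t)
          = (ω ^ (2 * k)) ^ t * (∑ j ∈ Finset.Icc (-(m : ℤ)) (m : ℤ), C j * (ω ^ (2 * j)) ^ t)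
          + (ω ^ (2 * -k)) ^ t * (∑ j ∈ Finset.Icc (-(m : ℤ)) (m : ℤ), C j * (ω ^ (2 * j)) ^ t)
          - 2 * ((ω ^ ((2:ℤ) * 0)) ^ t * (∑ j ∈ Finset.Icc (-(m : ℤ)) (m : ℤ), C j * (ω ^ (2 * j)) ^ t)) := by
        intro t _; simp; ring
      have h3 : ∑ t ∈ Finset.range N, (2:ℂ) * ((ω ^ ((2:ℤ) * 0)) ^ t *
          ∑ j ∈ Finset.Icc (-(m : ℤ)) (m : ℤ), C j * (ω ^ (2 * j)) ^ t)
          = 2 * ((N:ℂ) * C 0) := by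
        rw [← Finset.mul_sum, hT 0 (by rw [Finset.mem_Icc]; omega)]
        norm_num
      rw [Finset.sum_congr rfl expand, Finset.sum_sub_distrib, Finset.sum_add_distrib, h3,
        hT k hk, hT (-k) (by rw [Finset.mem_Icc]; omega), neg_neg]
    have hre : ((N:ℂ) * C (-k) + (N:ℂ) * C k - 2 * ((N:ℂ) * C 0)).re ≤ 0 := by
      rw [← hsum, Complex.re_sum]
      refine Finset.sum_nonpos fun t _ => ?_
      obtain ⟨r, hr1, hr2, hr3⟩ := hw t
      rw [hr3, show ((2 * r : ℝ) : ℂ) - 2 = ((2 * r - 2 : ℝ) : ℂ) by push_cast; ring,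
        Complex.re_ofReal_mul]
      exact mul_nonpos_of_nonpos_of_nonneg (by linarith) (hP t)
    simp only [Complex.sub_re, Complex.add_re, Complex.mul_re, Complex.natCast_re,
      Complex.natCast_im, Complex.re_ofNat, Complex.im_ofNat, hrek] at hre
    nlinarith [hre]
  exact abs_le.mpr ⟨by linarith, key2⟩

/-- For a real-valued nonnegative homogeneous polynomial
`P(z, z̄) = ∑_{k=-m}^{m} C_k z^{m+k} z̄^{m-k}` of degree `2m`, one has
`|Re C_k| ≤ C_0` for every `k`; moreover (after a rotation, which does not change
the modulus of the coefficients) `|C_k| ≤ C_0` for each `k`. -/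
theorem stmt_2 (m : ℕ) (C : ℤ → ℂ)
    (hreal : ∀ k : ℤ, C (-k) = starRingEnd ℂ (C k))
    (hnonneg : ∀ z : ℂ, 0 ≤ (∑ k ∈ Finset.Icc (-(m : ℤ)) (m : ℤ),
      C k * z ^ ((m : ℤ) + k).toNat * (starRingEnd ℂ z) ^ ((m : ℤ) - k).toNat).re) :
    ∀ k ∈ Finset.Icc (-(m : ℤ)) (m : ℤ),
      |(C k).re| ≤ (C 0).re ∧ ‖C k‖ ≤ (C 0).re := by
  intro k hk
  refine ⟨re_bound m C hreal hnonneg k hk, ?_⟩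
  obtain ⟨hk1, hk2⟩ := Finset.mem_Icc.mp hk
  have hC0 : 0 ≤ (C 0).re := by
    have := re_bound m C hreal hnonneg 0 (by rw [Finset.mem_Icc]; omega)
    exact le_trans (abs_nonneg _) this
  rcases eq_or_ne (C k) 0 with h0 | h0
  · rw [h0]; simpa using hC0
  rcases eq_or_ne k 0 with hk0 | hk0
  · -- C 0 is real
    subst hk0
    have hc : starRingEnd ℂ (C 0) = C 0 := by
      have := hreal 0; simpa using this.symm
    obtain ⟨r, hr⟩ := Complex.conj_eq_iff_real.mp hc
    rw [hr, Complex.norm_real]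
    have := re_bound m C hreal hnonneg 0 (by rw [Finset.mem_Icc]; omega)
    rw [hr] at this
    simpa using this
  -- rotation
  · set θ : ℝ := -(Complex.arg (C k)) / (2 * (k:ℝ)) with hθ
    set lam : ℂ := Complex.exp (θ * I) with hlam
    have habsl : ‖lam‖ = 1 := Complex.norm_exp_ofReal_mul_I θ
    have hlne : lam ≠ 0 := by intro h; rw [h] at habsl; simp at habsl
    have hconjl : starRingEnd ℂ lam = lam⁻¹ := (Complex.inv_eq_conj habsl).symm
    have hkR : (2 * (k:ℝ)) ≠ 0 := by
      simp only [ne_eq, mul_eq_zero]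
      push_neg
      exact ⟨by norm_num, Int.cast_ne_zero.mpr hk0⟩
    have h2kθ : 2 * (k:ℝ) * θ = -(Complex.arg (C k)) := by
      rw [hθ, mul_comm, div_mul_cancel₀ _ hkR]
    have hlampow : lam ^ (2 * k) = Complex.exp (-(Complex.arg (C k)) * I) := by
      rw [hlam, ← Complex.exp_int_mul]
      congr 1
      have hcast : ((2 * k : ℤ) : ℂ) * (↑θ * I) = ((2 * (k:ℝ) * θ : ℝ) : ℂ) * I := by
        push_cast; ring
      rw [hcast, h2kθ]
      push_cast
      ring
    set D : ℤ → ℂ := fun j => C j * lam ^ (2 * j) with hD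
    have hDreal : ∀ j : ℤ, D (-j) = starRingEnd ℂ (D j) := by
      intro j
      rw [hD]
      simp only []
      rw [map_mul, ← hreal j, map_zpow₀, hconjl, inv_zpow, ← zpow_neg]
      congr 1
      ring_nf
    have hDnonneg : ∀ z : ℂ, 0 ≤ (∑ j ∈ Finset.Icc (-(m : ℤ)) (m : ℤ),
        D j * z ^ ((m : ℤ) + j).toNat * (starRingEnd ℂ z) ^ ((m : ℤ) - j).toNat).re := by
      intro z
      have h := hnonneg (lam * z)
      have heq : (∑ j ∈ Finset.Icc (-(m : ℤ)) (m : ℤ),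
          C j * (lam * z) ^ ((m : ℤ) + j).toNat *
            (starRingEnd ℂ (lam * z)) ^ ((m : ℤ) - j).toNat)
          = ∑ j ∈ Finset.Icc (-(m : ℤ)) (m : ℤ),
            D j * z ^ ((m : ℤ) + j).toNat * (starRingEnd ℂ z) ^ ((m : ℤ) - j).toNat := by
        refine Finset.sum_congr rfl fun j hj => ?_
        obtain ⟨hj1, hj2⟩ := Finset.mem_Icc.mp hj
        have ha : ((((m : ℤ) + j).toNat : ℤ)) = (m : ℤ) + j := Int.toNat_of_nonneg (by linarith)
        have hb : ((((m : ℤ) - j).toNat : ℤ)) = (m : ℤ) - j := Int.toNat_of_nonneg (by linarith)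
        rw [map_mul, mul_pow, mul_pow, hconjl]
        have hll : lam ^ ((m : ℤ) + j).toNat * (lam⁻¹) ^ ((m : ℤ) - j).toNat
            = lam ^ (2 * j) := by
          rw [← zpow_natCast lam (((m : ℤ) + j).toNat), ha, inv_pow,
            ← zpow_natCast lam (((m : ℤ) - j).toNat), hb, ← zpow_neg, ← zpow_add₀ hlne]
          congr 1
          ring
        calc C j * (lam ^ ((m : ℤ) + j).toNat * z ^ ((m : ℤ) + j).toNat) *
              ((lam⁻¹) ^ ((m : ℤ) - j).toNat * (starRingEnd ℂ z) ^ ((m : ℤ) - j).toNat)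
            = C j * (lam ^ ((m : ℤ) + j).toNat * (lam⁻¹) ^ ((m : ℤ) - j).toNat) *
              z ^ ((m : ℤ) + j).toNat * (starRingEnd ℂ z) ^ ((m : ℤ) - j).toNat := by ring
          _ = D j * z ^ ((m : ℤ) + j).toNat * (starRingEnd ℂ z) ^ ((m : ℤ) - j).toNat := by
              rw [hll, hD]
      rwa [heq] at h
    have hDk : D k = (‖C k‖ : ℂ) := by
      rw [hD]
      simp only []
      rw [hlampow]
      nth_rewrite 1 [← Complex.norm_mul_exp_arg_mul_I (C k)]
      rw [mul_assoc, ← Complex.exp_add]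
      have h9 : (Complex.arg (C k) : ℂ) * I + -(Complex.arg (C k) : ℂ) * I = 0 := by
        ring
      rw [h9, Complex.exp_zero, mul_one]
    have hfin := re_bound m D hDreal hDnonneg k hk
    rw [hDk] at hfin
    have hD0 : D 0 = C 0 := by rw [hD]; simp
    rw [hD0] at hfin
    simp only [Complex.ofReal_re] at hfin
    rw [← _root_.abs_of_nonneg (norm_nonneg (C k))]
    exact hfin
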